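/- arXiv:2310.15870 — 9 statements merged into one kernel-verified Lean document; each statement's English description precedes it below -/
import Mathlib

section
/- For pure advection (β = 0), assume s₋ + s₊ ≠ 0 and let û be the unique solution of the transmission condition F̂₋(û) + F̂₊(û) = 0. Then, with a = α·n₋, the common normal flux seen from the '−' side satisfies F̂₋(û) = ((a·s₋ + s₊s₋)/(s₋+s₊))·u₋ + ((a·s₊ − s₊s₋)/(s₋+s₊))·u₊, and F̂₊(û) = −F̂₋(û). -/
open RealInnerProductSpace

/-- Pure advection (`β = 0`): with `s₋ + s₊ ≠ 0` and `uhat` the solution of the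
transmission condition, the common normal flux from the `−` side is
`((a s₋ + s₊ s₋)/(s₋+s₊)) u₋ + ((a s₊ − s₊ s₋)/(s₋+s₊)) u₊`, and
`F̂₊(uhat) = −F̂₋(uhat)`. -/
theorem stmt_2 (d : ℕ) (hd : 1 ≤ d)
    (nm : EuclideanSpace ℝ (Fin d)) (hn : ‖nm‖ = 1)
    (α : EuclideanSpace ℝ (Fin d)) (β : ℝ) (hβ : β = 0)
    (um up : ℝ) (qm qp : EuclideanSpace ℝ (Fin d)) (sm sp : ℝ)
    (hs : sm + sp ≠ 0) (uhat : ℝ)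
    (htrans :
      (⟪α, nm⟫ * uhat - β * ⟪qm, nm⟫ + sm * (um - uhat)) +
      (⟪α, -nm⟫ * uhat - β * ⟪qp, -nm⟫ + sp * (up - uhat)) = 0) :
    (⟪α, nm⟫ * uhat - β * ⟪qm, nm⟫ + sm * (um - uhat))
      = ((⟪α, nm⟫ * sm + sp * sm) / (sm + sp)) * um
        + ((⟪α, nm⟫ * sp - sp * sm) / (sm + sp)) * up
    ∧ (⟪α, -nm⟫ * uhat - β * ⟪qp, -nm⟫ + sp * (up - uhat))
      = -(⟪α, nm⟫ * uhat - β * ⟪qm, nm⟫ + sm * (um - uhat)) := by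
  rw [inner_neg_right] at htrans ⊢
  subst hβ
  have huhat : uhat = (sm * um + sp * up) / (sm + sp) := by
    field_simp
    linarith
  subst huhat
  constructor
  · field_simp
    ring
  · linarith
end

section
/- For pure advection (β = 0) with equal nonzero stabilization on both sides, s₋ = s₊ = s ≠ 0, the unique û solving the transmission condition F̂₋(û) + F̂₊(û) = 0 satisfies u₋ − û = û − u₊ (equivalently û = (u₋ + u₊)/2), which is the relationship between the trace variable and the interface solution in standard FR schemes. -/
open RealInnerProductSpace

/-- Pure advection (`β = 0`) with equal nonzero stabilization `s₋ = s₊ = s ≠ 0`: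
the unique solution `uhat` of the transmission condition satisfies
`u₋ − uhat = uhat − u₊`, equivalently `uhat = (u₋ + u₊)/2`. -/
theorem stmt_3 (d : ℕ) (hd : 1 ≤ d)
    (nm : EuclideanSpace ℝ (Fin d)) (hn : ‖nm‖ = 1)
    (α : EuclideanSpace ℝ (Fin d)) (β : ℝ) (hβ : β = 0)
    (um up : ℝ) (qm qp : EuclideanSpace ℝ (Fin d)) (s : ℝ) (hs : s ≠ 0)
    (uhat : ℝ)
    (htrans :
      (⟪α, nm⟫ * uhat - β * ⟪qm, nm⟫ + s * (um - uhat)) +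
      (⟪α, -nm⟫ * uhat - β * ⟪qp, -nm⟫ + s * (up - uhat)) = 0) :
    um - uhat = uhat - up ∧ uhat = (um + up) / 2 := by
  rw [inner_neg_right] at htrans
  subst hβ
  have h : s * (um - uhat) + s * (up - uhat) = 0 := by linarith
  have h2 : (um - uhat) + (up - uhat) = 0 := by
    have := mul_eq_zero.mp (by linarith [h] : s * ((um - uhat) + (up - uhat)) = 0)
    tauto
  constructor <;> linarith
end

section
/- If the stabilization parameters satisfy s₋ ≥ (α·n₋)/2 and s₊ ≥ (α·n₊)/2, then for every û ∈ ℝ the pointwise face-energy contribution is nonpositive: −u₋·F̂₋(û) − u₊·F̂₊(û) + (1/2)((α·n₋)u₋² + (α·n₊)u₊²) − (û − u₋)(−β q₋·n₋) − (û − u₊)(−β q₊·n₊) + û·F̂₋(û) + û·F̂₊(û) ≤ 0. This is the face-level nonpositivity underlying the energy stability theorem for hybridized FR methods for linear advection–diffusion. -/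
open RealInnerProductSpace

/-- If `s₋ ≥ (α·n₋)/2` and `s₊ ≥ (α·n₊)/2`, then for every `uhat` the pointwise
face-energy contribution is nonpositive. -/
theorem stmt_5 (d : ℕ) (hd : 1 ≤ d)
    (nm : EuclideanSpace ℝ (Fin d)) (hn : ‖nm‖ = 1)
    (α : EuclideanSpace ℝ (Fin d)) (β : ℝ)
    (um up : ℝ) (qm qp : EuclideanSpace ℝ (Fin d)) (sm sp : ℝ)
    (hsm : sm ≥ ⟪α, nm⟫ / 2) (hsp : sp ≥ ⟪α, -nm⟫ / 2) :
    ∀ uhat : ℝ,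
      -um * (⟪α, nm⟫ * uhat - β * ⟪qm, nm⟫ + sm * (um - uhat))
      - up * (⟪α, -nm⟫ * uhat - β * ⟪qp, -nm⟫ + sp * (up - uhat))
      + (1 / 2) * (⟪α, nm⟫ * um ^ 2 + ⟪α, -nm⟫ * up ^ 2)
      - (uhat - um) * (-β * ⟪qm, nm⟫)
      - (uhat - up) * (-β * ⟪qp, -nm⟫)
      + uhat * (⟪α, nm⟫ * uhat - β * ⟪qm, nm⟫ + sm * (um - uhat))
      + uhat * (⟪α, -nm⟫ * uhat - β * ⟪qp, -nm⟫ + sp * (up - uhat))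
      ≤ 0 := by
  intro uhat
  have hneg : ⟪α, -nm⟫ = -⟪α, nm⟫ := by simp
  set a := ⟪α, nm⟫
  set bm := ⟪qm, nm⟫
  have hbp : ⟪qp, -nm⟫ = -⟪qp, nm⟫ := by simp
  rw [hneg] at hsp ⊢
  rw [hbp] at *
  nlinarith [sq_nonneg (um - uhat), sq_nonneg (up - uhat), mul_nonneg (sub_nonneg.2 hsm) (sq_nonneg (um - uhat)), mul_nonneg (sub_nonneg.2 hsp) (sq_nonneg (up - uhat))]
end

section
/- Assume a = α·n₋ ≠ 0 and take the upwind-type stabilization s₋ = s₊ = λ|a| with λ ∈ ℝ. Let σ = a/|a| and ζ₋ = 2λ − σ, ζ₊ = 2λ + σ. Then s₋ − (α·n₋)/2 = (|a|/2)ζ₋ and s₊ − (α·n₊)/2 = (|a|/2)ζ₊, and the quadratic form ζ₋(u₋ − û)² + ζ₊(u₊ − û)² is nonnegative for all real values u₋, u₊, û if and only if λ ≥ 1/2. -/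
open RealInnerProductSpace

/-- Upwind-type stabilization `s₋ = s₊ = λ|a|` with `a = α·n₋ ≠ 0`, `σ = a/|a|`,
`ζ₋ = 2λ − σ`, `ζ₊ = 2λ + σ`: then `s₋ − a/2 = (|a|/2)ζ₋`,
`s₊ − (α·n₊)/2 = (|a|/2)ζ₊`, and `ζ₋(u₋−û)² + ζ₊(u₊−û)² ≥ 0` for all reals
iff `λ ≥ 1/2`. -/
theorem stmt_6 (d : ℕ) (hd : 1 ≤ d)
    (nm : EuclideanSpace ℝ (Fin d)) (hn : ‖nm‖ = 1)
    (α : EuclideanSpace ℝ (Fin d)) (ha : ⟪α, nm⟫ ≠ 0)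
    (lam : ℝ) (sm sp : ℝ)
    (hsm : sm = lam * |⟪α, nm⟫|) (hsp : sp = lam * |⟪α, nm⟫|)
    (σ ζm ζp : ℝ) (hσ : σ = ⟪α, nm⟫ / |⟪α, nm⟫|)
    (hζm : ζm = 2 * lam - σ) (hζp : ζp = 2 * lam + σ) :
    sm - ⟪α, nm⟫ / 2 = (|⟪α, nm⟫| / 2) * ζm
    ∧ sp - ⟪α, -nm⟫ / 2 = (|⟪α, nm⟫| / 2) * ζp
    ∧ ((∀ um up uhat : ℝ,
          0 ≤ ζm * (um - uhat) ^ 2 + ζp * (up - uhat) ^ 2) ↔ lam ≥ 1 / 2) := by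
  set a : ℝ := ⟪α, nm⟫ with haa
  have habs : |a| ≠ 0 := abs_ne_zero.mpr ha
  have hσa : |a| * σ = a := by rw [hσ]; field_simp
  have hneg : ⟪α, -nm⟫ = -a := by rw [inner_neg_right]
  have hσ1 : σ = 1 ∨ σ = -1 := by
    rcases abs_cases a with ⟨h1, _⟩ | ⟨h1, _⟩
    · left; rw [hσ, h1]; field_simp
    · right; rw [hσ, h1]; field_simp
  have hσabs : |σ| = 1 := by rcases hσ1 with h | h <;> simp [h]
  refine ⟨by rw [hsm, hζm]; nlinarith, ?_, ?_⟩
  · rw [hsp, hζp, hneg]; nlinarith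
  constructor
  · intro h
    have h1 := h 1 0 0
    have h2 := h 0 1 0
    rcases hσ1 with h | h <;> nlinarith [h1, h2]
  · intro h um up uhat
    have hm : 0 ≤ ζm := by
      rw [hζm]; rcases hσ1 with hs | hs <;> rw [hs] <;> linarith
    have hp : 0 ≤ ζp := by
      rw [hζp]; rcases hσ1 with hs | hs <;> rw [hs] <;> linarith
    positivity
end

section
/- For pure advection (β = 0) with a = α·n₋ ≠ 0, λ > 0, and s₋ = s₊ = λ|a|, let û be the unique solution of the transmission condition F̂₋(û) + F̂₊(û) = 0. Then the face energy term reduces to the standard FR upwind dissipation: (s₋ − a/2)(u₋ − û)² + (s₊ + a/2)(u₊ − û)² = (λ/2)|a|(u₋ − u₊)². -/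
open RealInnerProductSpace

/-- Pure advection (`β = 0`), `a = α·n₋ ≠ 0`, `λ > 0`, `s₋ = s₊ = λ|a|`, and
`uhat` the solution of the transmission condition: the face energy term reduces
to the standard FR upwind dissipation `(λ/2)|a|(u₋ − u₊)²`. -/
theorem stmt_7 (d : ℕ) (hd : 1 ≤ d)
    (nm : EuclideanSpace ℝ (Fin d)) (hn : ‖nm‖ = 1)
    (α : EuclideanSpace ℝ (Fin d)) (β : ℝ) (hβ : β = 0)
    (ha : ⟪α, nm⟫ ≠ 0) (lam : ℝ) (hlam : 0 < lam) (sm sp : ℝ)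
    (hsm : sm = lam * |⟪α, nm⟫|) (hsp : sp = lam * |⟪α, nm⟫|)
    (um up : ℝ) (qm qp : EuclideanSpace ℝ (Fin d)) (uhat : ℝ)
    (htrans :
      (⟪α, nm⟫ * uhat - β * ⟪qm, nm⟫ + sm * (um - uhat)) +
      (⟪α, -nm⟫ * uhat - β * ⟪qp, -nm⟫ + sp * (up - uhat)) = 0) :
    (sm - ⟪α, nm⟫ / 2) * (um - uhat) ^ 2 + (sp + ⟪α, nm⟫ / 2) * (up - uhat) ^ 2
      = (lam / 2) * |⟪α, nm⟫| * (um - up) ^ 2 := by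
  rw [inner_neg_right, hβ] at htrans
  have habs : (0:ℝ) < |⟪α, nm⟫| := abs_pos.mpr ha
  have hs : sm ≠ 0 := by rw [hsm]; positivity
  have huhat : uhat = (um + up) / 2 := by
    have : sm * (um - uhat) + sp * (up - uhat) = 0 := by linarith
    rw [hsm, hsp] at this
    have hne : lam * |⟪α, nm⟫| ≠ 0 := by positivity
    have h2 := mul_left_cancel₀ hne
      (show lam * |⟪α, nm⟫| * ((um - uhat) + (up - uhat))
          = lam * |⟪α, nm⟫| * 0 by linear_combination this)
    linarith
  subst huhat hsm hsp
  ring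
end

section
/- For pure advection (β = 0), let a = α·n₋ ≠ 0, σ = a/|a|, and let γ > 0 with γ ∉ [1/2, 1]. Define the one-sided stabilization parameters s₋ = γ|a| + a and s₊ = (γσ/(2γ + σ))|a| − a. Then s₋ + s₊ ≠ 0, and the unique trace û solving the transmission condition F̂₋(û) + F̂₊(û) = 0 is û = (1 + σ/(2γ))·u₋ − (σ/(2γ))·u₊. -/
open RealInnerProductSpace

/-- Pure advection (`β = 0`), `a = α·n₋ ≠ 0`, `σ = a/|a|`, `γ > 0`, `γ ∉ [1/2,1]`,
with one-sided stabilization `s₋ = γ|a| + a`, `s₊ = (γσ/(2γ+σ))|a| − a`: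
then `s₋ + s₊ ≠ 0` and the unique trace solving the transmission condition is
`uhat = (1 + σ/(2γ))u₋ − (σ/(2γ))u₊`. -/
theorem stmt_8 (d : ℕ) (hd : 1 ≤ d)
    (nm : EuclideanSpace ℝ (Fin d)) (hn : ‖nm‖ = 1)
    (α : EuclideanSpace ℝ (Fin d)) (β : ℝ) (hβ : β = 0)
    (ha : ⟪α, nm⟫ ≠ 0) (σ : ℝ) (hσ : σ = ⟪α, nm⟫ / |⟪α, nm⟫|)
    (γ : ℝ) (hγ : 0 < γ) (hγ' : γ ∉ Set.Icc (1 / 2 : ℝ) 1)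
    (sm sp : ℝ)
    (hsm : sm = γ * |⟪α, nm⟫| + ⟪α, nm⟫)
    (hsp : sp = (γ * σ / (2 * γ + σ)) * |⟪α, nm⟫| - ⟪α, nm⟫)
    (um up : ℝ) (qm qp : EuclideanSpace ℝ (Fin d)) :
    sm + sp ≠ 0
    ∧ ∀ uhat : ℝ,
        (⟪α, nm⟫ * uhat - β * ⟪qm, nm⟫ + sm * (um - uhat)) +
        (⟪α, -nm⟫ * uhat - β * ⟪qp, -nm⟫ + sp * (up - uhat)) = 0 →
        uhat = (1 + σ / (2 * γ)) * um - (σ / (2 * γ)) * up := by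
  have hγ2 : γ < 1/2 ∨ 1 < γ := by
    rcases lt_or_ge γ (1/2) with h | h
    · exact Or.inl h
    · right; by_contra hle; push_neg at hle; exact hγ' ⟨h, hle⟩
  have hγ0 : γ ≠ 0 := ne_of_gt hγ
  simp only [hβ, inner_neg_right, zero_mul, sub_zero]
  generalize hA : (⟪α, nm⟫ : ℝ) = a at ha hσ hsm hsp ⊢
  rcases ha.lt_or_gt with hneg | hpos
  · -- a < 0, σ = -1
    have habs : |a| = -a := abs_of_neg hneg
    have hσ1 : σ = -1 := by rw [hσ, habs]; field_simp
    have h12 : 2*γ - 1 ≠ 0 := by rcases hγ2 with h|h <;> intro h0 <;> linarith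
    have h12' : 2*γ + (-1:ℝ) ≠ 0 := by intro h0; exact h12 (by linarith)
    have h1 : γ - 1 ≠ 0 := by rcases hγ2 with h|h <;> intro h0 <;> linarith
    have hsum : sm + sp = 2*a*γ*(1-γ)/(2*γ-1) := by
      rw [hsm, hsp, habs, hσ1]; linear_combination (a*γ) * mul_inv_cancel₀ h12
    have hsumne : sm + sp ≠ 0 := by
      rw [hsum]
      apply div_ne_zero _ h12
      refine mul_ne_zero (mul_ne_zero ?_ hγ0) ?_
      · intro h0; exact ha (by linarith)
      · intro h0; exact h1 (by linarith)
    refine ⟨hsumne, ?_⟩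
    intro uhat h
    have key : (sm+sp) * uhat = sm * um + sp * up := by ring_nf; ring_nf at h; linarith
    have key2 : (sm+sp) * ((1 + σ / (2 * γ)) * um - (σ / (2 * γ)) * up) = sm * um + sp * up := by
      rw [hsum, hsm, hsp, habs, hσ1, show 2*γ + (-1:ℝ) = 2*γ-1 by ring]; field_simp; ring_nf
    exact mul_left_cancel₀ hsumne (key.trans key2.symm)
  · -- a > 0, σ = 1
    have habs : |a| = a := abs_of_pos hpos
    have hσ1 : σ = 1 := by rw [hσ, habs]; field_simp
    have h12 : 2*γ + 1 ≠ 0 := by intro h0; linarith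
    have hsum : sm + sp = 2*a*γ*(1+γ)/(2*γ+1) := by
      rw [hsm, hsp, habs, hσ1]; field_simp [h12]; ring
    have hsumne : sm + sp ≠ 0 := by
      rw [hsum]
      apply div_ne_zero _ h12
      refine mul_ne_zero (mul_ne_zero ?_ hγ0) ?_
      · intro h0; exact ha (by linarith)
      · intro h0; linarith
    refine ⟨hsumne, ?_⟩
    intro uhat h
    have key : (sm+sp) * uhat = sm * um + sp * up := by ring_nf; ring_nf at h; linarith
    have key2 : (sm+sp) * ((1 + σ / (2 * γ)) * um - (σ / (2 * γ)) * up) = sm * um + sp * up := by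
      rw [hsum, hsm, hsp, habs, hσ1]; field_simp [h12]; ring
    exact mul_left_cancel₀ hsumne (key.trans key2.symm)
end

section
/- For pure advection (β = 0), let a = α·n₋ ≠ 0, σ = a/|a|, and let γ > 0 with γ ∉ [1/2, 1]. With the one-sided stabilization parameters s₋ = γ|a| + a and s₊ = (γσ/(2γ + σ))|a| − a, and û the unique solution of the transmission condition F̂₋(û) + F̂₊(û) = 0, the common normal flux is exactly the central flux: F̂₋(û) = a·(u₋ + u₊)/2. Hence this choice of stabilization recovers the exact central FR scheme for pure advection via HFR. -/
open RealInnerProductSpace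

/-- Pure advection (`β = 0`), `a = α·n₋ ≠ 0`, `σ = a/|a|`, `γ > 0`, `γ ∉ [1/2,1]`,
with one-sided stabilization `s₋ = γ|a| + a`, `s₊ = (γσ/(2γ+σ))|a| − a`, and `uhat`
the solution of the transmission condition: the common normal flux is the central
flux `F̂₋(uhat) = a(u₋+u₊)/2`. -/
theorem stmt_9 (d : ℕ) (hd : 1 ≤ d)
    (nm : EuclideanSpace ℝ (Fin d)) (hn : ‖nm‖ = 1)
    (α : EuclideanSpace ℝ (Fin d)) (β : ℝ) (hβ : β = 0)
    (ha : ⟪α, nm⟫ ≠ 0) (σ : ℝ) (hσ : σ = ⟪α, nm⟫ / |⟪α, nm⟫|)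
    (γ : ℝ) (hγ : 0 < γ) (hγ' : γ ∉ Set.Icc (1 / 2 : ℝ) 1)
    (sm sp : ℝ)
    (hsm : sm = γ * |⟪α, nm⟫| + ⟪α, nm⟫)
    (hsp : sp = (γ * σ / (2 * γ + σ)) * |⟪α, nm⟫| - ⟪α, nm⟫)
    (um up : ℝ) (qm qp : EuclideanSpace ℝ (Fin d)) (uhat : ℝ)
    (htrans :
      (⟪α, nm⟫ * uhat - β * ⟪qm, nm⟫ + sm * (um - uhat)) +
      (⟪α, -nm⟫ * uhat - β * ⟪qp, -nm⟫ + sp * (up - uhat)) = 0) :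
    ⟪α, nm⟫ * uhat - β * ⟪qm, nm⟫ + sm * (um - uhat)
      = ⟪α, nm⟫ * (um + up) / 2 := by
  subst hβ
  rw [inner_neg_right] at htrans
  set a := ⟪α, nm⟫ with hA
  rcases lt_or_gt_of_ne ha with h | h
  · -- a < 0 : |a| = -a, σ = -1
    have habs : |a| = -a := abs_of_neg h
    have hσ1 : σ = -1 := by rw [hσ, habs]; field_simp
    subst hσ1
    have hne : (2 : ℝ) * γ - 1 ≠ 0 := by
      intro hc
      exact hγ' ⟨by linarith, by linarith⟩
    have hγ1 : (1 : ℝ) - γ ≠ 0 := by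
      intro hc
      exact hγ' ⟨by linarith, by linarith⟩
    have hsm' : sm = a * (1 - γ) := by rw [hsm, habs]; ring
    have hne' : (2 * γ + -1 : ℝ) ≠ 0 := by intro hc; exact hne (by linarith)
    have hsp' : sp * (2 * γ - 1) = a * (1 - γ) := by
      rw [hsp, habs, show (2 * γ + -1 : ℝ) = 2 * γ - 1 by ring, sub_mul, mul_right_comm,
        div_mul_cancel₀ _ hne]
      ring
    have key : a * (1 - γ) * ((2 * γ - 1) * (um - uhat) + (up - uhat)) = 0 := by
      linear_combination (2 * γ - 1) * htrans + (uhat - up) * hsp'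
        + (1 - 2 * γ) * (um - uhat) * hsm'
    have h0 : a * (1 - γ) ≠ 0 := mul_ne_zero ha hγ1
    have key2 : (2 * γ - 1) * (um - uhat) + (up - uhat) = 0 :=
      (mul_eq_zero.mp key).resolve_left h0
    linear_combination (-a / 2) * key2 + (um - uhat) * hsm'
  · -- a > 0 : |a| = a, σ = 1
    have habs : |a| = a := abs_of_pos h
    have hσ1 : σ = 1 := by rw [hσ, habs]; field_simp
    subst hσ1
    have hne : (2 : ℝ) * γ + 1 ≠ 0 := by positivity
    have hγ1 : (γ : ℝ) + 1 ≠ 0 := by positivity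
    have hsm' : sm = a * (γ + 1) := by rw [hsm, habs]; ring
    have hsp' : sp * (2 * γ + 1) = -(a * (γ + 1)) := by
      rw [hsp, habs]
      field_simp
      ring
    have key : a * (γ + 1) * ((2 * γ + 1) * (um - uhat) - (up - uhat)) = 0 := by
      linear_combination (2 * γ + 1) * htrans + (uhat - up) * hsp'
        + (-(2 * γ) - 1) * (um - uhat) * hsm'
    have h0 : a * (γ + 1) ≠ 0 := mul_ne_zero ha hγ1
    have key2 : (2 * γ + 1) * (um - uhat) - (up - uhat) = 0 :=
      (mul_eq_zero.mp key).resolve_left h0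
    linear_combination (a / 2) * key2 + (um - uhat) * hsm'
end

section
/- Assume s₋ + s₊ ≠ 0 and let û be the unique solution of the transmission condition F̂₋(û) + F̂₊(û) = 0. Then û admits the LDG-H decomposition û = {{u}} − ζ⟦u⟧ − βθ⟦q⟧, where {{u}} = (u₋ + u₊)/2, ⟦u⟧ = u₋ − u₊, ⟦q⟧ = q₋·n₋ + q₊·n₊, ζ = (s₊ − s₋)/(2(s₋ + s₊)), and θ = 1/(2{{s}}) = 1/(s₋ + s₊). Moreover θ ≠ 0 for every finite choice of the stabilization parameters; hence for diffusion problems (β ≠ 0) the HFR numerical trace never coincides with the LDG trace form {{u}} − ζ⟦u⟧ (which has θ = 0) when ⟦q⟧ ≠ 0. -/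
open RealInnerProductSpace

/-- LDG-H decomposition of the HFR trace: with `s₋ + s₊ ≠ 0` and `uhat` the
solution of the transmission condition, `uhat = {{u}} − ζ⟦u⟧ − βθ⟦q⟧` with
`ζ = (s₊ − s₋)/(2(s₋+s₊))` and `θ = 1/(s₋+s₊)`; moreover `θ ≠ 0`, so when
`β ≠ 0` and `⟦q⟧ ≠ 0` the HFR trace differs from the LDG form `{{u}} − ζ⟦u⟧`. -/
theorem stmt_10 (d : ℕ) (hd : 1 ≤ d)
    (nm : EuclideanSpace ℝ (Fin d)) (hn : ‖nm‖ = 1)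
    (α : EuclideanSpace ℝ (Fin d)) (β : ℝ)
    (um up : ℝ) (qm qp : EuclideanSpace ℝ (Fin d)) (sm sp : ℝ)
    (hs : sm + sp ≠ 0) (uhat : ℝ)
    (htrans :
      (⟪α, nm⟫ * uhat - β * ⟪qm, nm⟫ + sm * (um - uhat)) +
      (⟪α, -nm⟫ * uhat - β * ⟪qp, -nm⟫ + sp * (up - uhat)) = 0)
    (ζ θ : ℝ) (hζ : ζ = (sp - sm) / (2 * (sm + sp))) (hθ : θ = 1 / (sm + sp)) :
    uhat = (um + up) / 2 - ζ * (um - up) - β * θ * (⟪qm, nm⟫ + ⟪qp, -nm⟫)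
    ∧ θ ≠ 0
    ∧ (β ≠ 0 → ⟪qm, nm⟫ + ⟪qp, -nm⟫ ≠ 0 →
        uhat ≠ (um + up) / 2 - ζ * (um - up)) := by
  have hθ0 : θ ≠ 0 := by rw [hθ]; exact one_div_ne_zero hs
  rw [inner_neg_right] at htrans
  have key : uhat = (um + up) / 2 - ζ * (um - up) - β * θ * (⟪qm, nm⟫ + ⟪qp, -nm⟫) := by
    rw [inner_neg_right, hζ, hθ] at *
    generalize hA : (⟪α, nm⟫ : ℝ) = A at *
    generalize hB : (⟪qm, nm⟫ : ℝ) = B at *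
    generalize hC : (⟪qp, nm⟫ : ℝ) = C at *
    field_simp
    linear_combination (-2) * htrans
  refine ⟨key, hθ0, fun hβ hq hcon => ?_⟩
  rw [key] at hcon
  have : β * θ * (⟪qm, nm⟫ + ⟪qp, -nm⟫) = 0 := by linarith
  exact (mul_ne_zero (mul_ne_zero hβ hθ0) hq) this
end

section
/- For pure diffusion (α = 0) with viscous stabilization s₋ = s₊ = τ, the pointwise face-energy contribution satisfies, for every û ∈ ℝ: −u₋·F̂₋(û) − u₊·F̂₊(û) − (û − u₋)(−β q₋·n₋) − (û − u₊)(−β q₊·n₊) + û·F̂₋(û) + û·F̂₊(û) = −τ[(u₋ − û)² + (u₊ − û)²], which is ≤ 0 whenever τ ≥ 0. Hence for pure diffusion the hybridized FR face terms are dissipative for any positive viscous stabilization τ > 0. -/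
open RealInnerProductSpace

/-- Pure diffusion (`α = 0`) with `s₋ = s₊ = τ`: for every `uhat` the pointwise
face-energy contribution equals `−τ[(u₋−uhat)² + (u₊−uhat)²]`, which is `≤ 0`
whenever `τ ≥ 0`. -/
theorem stmt_11 (d : ℕ) (hd : 1 ≤ d)
    (nm : EuclideanSpace ℝ (Fin d)) (hn : ‖nm‖ = 1)
    (β : ℝ) (um up : ℝ) (qm qp : EuclideanSpace ℝ (Fin d)) (τ : ℝ) :
    ∀ uhat : ℝ,
      (-um * (-β * ⟪qm, nm⟫ + τ * (um - uhat))
        - up * (-β * ⟪qp, -nm⟫ + τ * (up - uhat))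
        - (uhat - um) * (-β * ⟪qm, nm⟫)
        - (uhat - up) * (-β * ⟪qp, -nm⟫)
        + uhat * (-β * ⟪qm, nm⟫ + τ * (um - uhat))
        + uhat * (-β * ⟪qp, -nm⟫ + τ * (up - uhat))
        = -τ * ((um - uhat) ^ 2 + (up - uhat) ^ 2))
      ∧ (0 ≤ τ →
          -um * (-β * ⟪qm, nm⟫ + τ * (um - uhat))
          - up * (-β * ⟪qp, -nm⟫ + τ * (up - uhat))
          - (uhat - um) * (-β * ⟪qm, nm⟫)
          - (uhat - up) * (-β * ⟪qp, -nm⟫)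
          + uhat * (-β * ⟪qm, nm⟫ + τ * (um - uhat))
          + uhat * (-β * ⟪qp, -nm⟫ + τ * (up - uhat)) ≤ 0) := by
  intro uhat
  have h : -um * (-β * ⟪qm, nm⟫ + τ * (um - uhat))
      - up * (-β * ⟪qp, -nm⟫ + τ * (up - uhat))
      - (uhat - um) * (-β * ⟪qm, nm⟫)
      - (uhat - up) * (-β * ⟪qp, -nm⟫)
      + uhat * (-β * ⟪qm, nm⟫ + τ * (um - uhat))
      + uhat * (-β * ⟪qp, -nm⟫ + τ * (up - uhat))
      = -τ * ((um - uhat) ^ 2 + (up - uhat) ^ 2) := by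
    simp only [inner_neg_right]
    ring
  refine ⟨h, fun hτ => ?_⟩
  rw [h]
  have : 0 ≤ (um - uhat) ^ 2 + (up - uhat) ^ 2 := by positivity
  nlinarith
end
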